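/- The step-indexed logical relation for extended combinatory logic (xCL) is sound for the contextual preorder: for all terms p,q ∈ Λ, if L(p,q) then p ≲ctx q. -/

import Mathlib

namespace XCL

/-- Terms of extended combinatory logic (xCL). -/
inductive Tm : Type
  | S : Tm
  | K : Tm
  | I : Tm
  | S1 (t : Tm) : Tm
  | K1 (t : Tm) : Tm
  | S2 (t s : Tm) : Tm
  | app (t s : Tm) : Tm

/-- Labeled transitions `p —t→ p'` (`LStep p t p'`). -/
inductive LStep : Tm → Tm → Tm → Prop
  | S (t : Tm) : LStep .S t (.S1 t)
  | S1 (p t : Tm) : LStep (.S1 p) t (.S2 p t)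
  | S2 (p q t : Tm) : LStep (.S2 p q) t (.app (.app p t) (.app q t))
  | K (t : Tm) : LStep .K t (.K1 t)
  | K1 (p t : Tm) : LStep (.K1 p) t p
  | I (t : Tm) : LStep .I t t

/-- Unlabeled transitions `p → p'`. -/
inductive Step : Tm → Tm → Prop
  | appL {p p' : Tm} (q : Tm) : Step p p' → Step (.app p q) (.app p' q)
  | beta {p q p' : Tm} : LStep p q p' → Step (.app p q) p'

/-- `p ⇒ p'`: reflexive-transitive closure of `→`. -/
def Steps : Tm → Tm → Prop := Relation.ReflTransGen Step

/-- `p ⇒^t p'`: weak labeled transition. -/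
def WLStep (p t p' : Tm) : Prop := ∃ p'', Steps p p'' ∧ LStep p'' t p'

/-- `p` terminates: it admits no unlabeled transition. -/
def Terminates (p : Tm) : Prop := ∀ p', ¬ Step p p'

/-- `p ⇓ p'`. -/
def BigStep (p p' : Tm) : Prop := Steps p p' ∧ Terminates p'

/-- `p⇓`: `p` eventually terminates. -/
def Conv (p : Tm) : Prop := ∃ p', BigStep p p'

/-- Applicative simulations. -/
def IsAppSim (R : Tm → Tm → Prop) : Prop :=
  ∀ p q, R p q →
    (∀ p', Step p p' → ∃ q', Steps q q' ∧ R p' q') ∧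
    (∀ t p', LStep p t p' → ∃ q', WLStep q t q' ∧ R p' q')

/-- Applicative similarity `≲app`: the union of all applicative simulations. -/
def AppSim (p q : Tm) : Prop := ∃ R, IsAppSim R ∧ R p q

/-- One-hole contexts `C[·]`. -/
inductive Ctx : Type
  | hole : Ctx
  | S1 (c : Ctx) : Ctx
  | K1 (c : Ctx) : Ctx
  | S2L (c : Ctx) (s : Tm) : Ctx
  | S2R (t : Tm) (c : Ctx) : Ctx
  | appL (c : Ctx) (s : Tm) : Ctx
  | appR (t : Tm) (c : Ctx) : Ctx

/-- `C[p]`: plugging a term into the hole of a context. -/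
def plug : Ctx → Tm → Tm
  | .hole, p => p
  | .S1 c, p => .S1 (plug c p)
  | .K1 c, p => .K1 (plug c p)
  | .S2L c s, p => .S2 (plug c p) s
  | .S2R t c, p => .S2 t (plug c p)
  | .appL c s, p => .app (plug c p) s
  | .appR t c, p => .app t (plug c p)

/-- The contextual preorder `≲ctx`. -/
def CtxLe (p q : Tm) : Prop := ∀ C : Ctx, Conv (plug C p) → Conv (plug C q)

/-- Congruences: relations compatible with all xCL operators. -/
def IsCong (R : Tm → Tm → Prop) : Prop :=
  R .S .S ∧ R .K .K ∧ R .I .I ∧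
  (∀ p q, R p q → R (.S1 p) (.S1 q)) ∧
  (∀ p q, R p q → R (.K1 p) (.K1 q)) ∧
  (∀ p q p' q', R p q → R p' q' → R (.S2 p p') (.S2 q q')) ∧
  (∀ p q p' q', R p q → R p' q' → R (.app p p') (.app q q'))

/-- Adequacy for termination. -/
def Adequate (R : Tm → Tm → Prop) : Prop := ∀ p q, R p q → Conv p → Conv q

/-- The step-indexed approximations `Lⁿ`. -/
def LrelN : ℕ → Tm → Tm → Prop
  | 0, _, _ => True
  | n+1, p, q => LrelN n p q ∧
      (∀ p', Step p p' → ∃ q', Steps q q' ∧ LrelN n p' q') ∧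
      (Terminates p → ∃ qb, BigStep q qb ∧
        ∀ d e p' q', LrelN n d e → LStep p d p' → LStep qb e q' → LrelN n p' q')

/-- The step-indexed logical relation `L = ⋂ₙ Lⁿ`. -/
def LRel (p q : Tm) : Prop := ∀ n, LrelN n p q

end XCL

namespace XCL

lemma step_src_app {p p' : Tm} (h : Step p p') : ∃ a b, p = .app a b := by
  cases h <;> exact ⟨_, _, rfl⟩

lemma lstep_terminates {p t p' : Tm} (h : LStep p t p') : Terminates p := by
  intro r hs
  rcases step_src_app hs with ⟨a, b, hab⟩
  subst hab; cases h

lemma lstep_det {p t a b : Tm} (h1 : LStep p t a) (h2 : LStep p t b) : a = b := by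
  cases h1 <;> cases h2 <;> rfl

lemma app_step (p : Tm) : ∀ q : Tm, ∃ r, Step (.app p q) r := by
  induction p with
  | S => exact fun q => ⟨_, .beta (.S q)⟩
  | K => exact fun q => ⟨_, .beta (.K q)⟩
  | I => exact fun q => ⟨_, .beta (.I q)⟩
  | S1 t _ => exact fun q => ⟨_, .beta (.S1 t q)⟩
  | K1 t _ => exact fun q => ⟨_, .beta (.K1 t q)⟩
  | S2 t s _ _ => exact fun q => ⟨_, .beta (.S2 t s q)⟩
  | app a b iha _ =>
    intro q
    obtain ⟨r, hr⟩ := iha b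
    exact ⟨_, .appL q hr⟩

lemma lstep_total {p : Tm} (h : Terminates p) (t : Tm) : ∃ p', LStep p t p' := by
  cases p with
  | S => exact ⟨_, .S t⟩
  | K => exact ⟨_, .K t⟩
  | I => exact ⟨_, .I t⟩
  | S1 a => exact ⟨_, .S1 a t⟩
  | K1 a => exact ⟨_, .K1 a t⟩
  | S2 a b => exact ⟨_, .S2 a b t⟩
  | app a b =>
    exfalso
    obtain ⟨r, hr⟩ := app_step a b
    exact h r hr

lemma steps_appL {p p' : Tm} (q : Tm) (h : Steps p p') :
    Steps (.app p q) (.app p' q) :=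
  Relation.ReflTransGen.lift (fun x => Tm.app x q) (fun _ _ h => Step.appL q h) _ _ h

lemma lrelN_succ {n : ℕ} {p q : Tm} (h : LrelN (n+1) p q) : LrelN n p q := h.1

lemma lrelN_expand : ∀ (n : ℕ) {p q q' : Tm}, Steps q q' → LrelN n p q' → LrelN n p q
  | 0, _, _, _, _, _ => trivial
  | n+1, p, q, q', hs, h =>
    ⟨lrelN_expand n hs h.1,
     fun p' hp => by
       obtain ⟨q2, hq2, hl⟩ := h.2.1 p' hp
       exact ⟨q2, hs.trans hq2, hl⟩,
     fun ht => by
       obtain ⟨qb, hqb, hf⟩ := h.2.2 ht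
       exact ⟨qb, ⟨hs.trans hqb.1, hqb.2⟩, hf⟩⟩

lemma compat : ∀ n : ℕ,
    (∀ p q, LrelN n p q → LrelN n (.S1 p) (.S1 q)) ∧
    (∀ p q, LrelN n p q → LrelN n (.K1 p) (.K1 q)) ∧
    (∀ p q p' q', LrelN n p q → LrelN n p' q' → LrelN n (.S2 p p') (.S2 q q')) ∧
    (∀ p q p' q', LrelN n p q → LrelN n p' q' → LrelN n (.app p p') (.app q q')) ∧
    (∀ p, LrelN n p p) := by
  intro n
  induction n with
  | zero => exact ⟨fun _ _ _ => trivial, fun _ _ _ => trivial,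
      fun _ _ _ _ _ _ => trivial, fun _ _ _ _ _ _ => trivial, fun _ => trivial⟩
  | succ n ih =>
    obtain ⟨cS1, cK1, cS2, cApp, crefl⟩ := ih
    have termS1 : ∀ a : Tm, Terminates (.S1 a) := by
      intro a r h; rcases step_src_app h with ⟨x, y, hxy⟩; cases hxy
    have termK1 : ∀ a : Tm, Terminates (.K1 a) := by
      intro a r h; rcases step_src_app h with ⟨x, y, hxy⟩; cases hxy
    have termS2 : ∀ a b : Tm, Terminates (.S2 a b) := by
      intro a b r h; rcases step_src_app h with ⟨x, y, hxy⟩; cases hxy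
    refine ⟨?_, ?_, ?_, ?_, ?_⟩
    · -- S1
      intro p q h
      refine ⟨cS1 p q h.1, ?_, ?_⟩
      · intro p' hs; exact absurd hs (termS1 p p')
      · intro _
        refine ⟨.S1 q, ⟨.refl, termS1 q⟩, ?_⟩
        intro d e p' q' hde h1 h2
        cases h1; cases h2
        exact cS2 _ _ _ _ h.1 hde
    · -- K1
      intro p q h
      refine ⟨cK1 p q h.1, ?_, ?_⟩
      · intro p' hs; exact absurd hs (termK1 p p')
      · intro _
        refine ⟨.K1 q, ⟨.refl, termK1 q⟩, ?_⟩
        intro d e p' q' hde h1 h2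
        cases h1; cases h2
        exact h.1
    · -- S2
      intro p q p' q' h h'
      refine ⟨cS2 p q p' q' h.1 h'.1, ?_, ?_⟩
      · intro r hs; exact absurd hs (termS2 p p' r)
      · intro _
        refine ⟨.S2 q q', ⟨.refl, termS2 q q'⟩, ?_⟩
        intro d e a b hde h1 h2
        cases h1; cases h2
        exact cApp _ _ _ _ (cApp _ _ _ _ h.1 hde) (cApp _ _ _ _ h'.1 hde)
    · -- app
      intro p q p' q' h h'
      refine ⟨cApp p q p' q' h.1 h'.1, ?_, ?_⟩
      · intro r hs
        cases hs with
        | appL s hstep =>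
          obtain ⟨q2, hq2, hl2⟩ := h.2.1 _ hstep
          exact ⟨.app q2 q', steps_appL q' hq2, cApp _ _ _ _ hl2 h'.1⟩
        | beta hl =>
          obtain ⟨qb, hqb, hf⟩ := h.2.2 (lstep_terminates hl)
          obtain ⟨qres, hlq⟩ := lstep_total hqb.2 q'
          exact ⟨qres, (steps_appL q' hqb.1).tail (.beta hlq), hf _ _ _ _ h'.1 hl hlq⟩
      · intro ht
        exfalso
        obtain ⟨r, hr⟩ := app_step p p'
        exact ht r hr
    · -- refl
      intro p
      refine ⟨crefl p, ?_, ?_⟩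
      · intro p' hs; exact ⟨p', .single hs, crefl p'⟩
      · intro ht
        refine ⟨p, ⟨.refl, ht⟩, ?_⟩
        intro d e a b hde h1 h2
        cases h1 <;> cases h2
        · exact cS1 _ _ hde
        · exact cS2 _ _ _ _ (crefl _) hde
        · exact cApp _ _ _ _ (cApp _ _ _ _ (crefl _) hde) (cApp _ _ _ _ (crefl _) hde)
        · exact cK1 _ _ hde
        · exact crefl _
        · exact hde

lemma lrel_step {p q p' : Tm} (h : LRel p q) (hs : Step p p') : LRel p' q := by
  intro n
  obtain ⟨q', hq', hl⟩ := (h (n+1)).2.1 p' hs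
  exact lrelN_expand n hq' hl

lemma lrel_adequate {p q : Tm} (h : LRel p q) (hc : Conv p) : Conv q := by
  obtain ⟨pb, hsteps, hterm⟩ := hc
  have key : ∀ r : Tm, Steps r pb → LRel r q → Conv q := by
    intro r hsteps
    induction hsteps using Relation.ReflTransGen.head_induction_on with
    | refl =>
      intro h'
      obtain ⟨qb, hqb, _⟩ := (h' 1).2.2 hterm
      exact ⟨qb, hqb⟩
    | head hstep _ ih =>
      intro h'
      exact ih (lrel_step h' hstep)
  exact key p hsteps h

lemma lrel_refl (p : Tm) : LRel p p := fun n => (compat n).2.2.2.2 p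

lemma lrel_plug (C : Ctx) {p q : Tm} (h : LRel p q) : LRel (plug C p) (plug C q) := by
  induction C with
  | hole => exact h
  | S1 c ih => exact fun n => (compat n).1 _ _ (ih n)
  | K1 c ih => exact fun n => (compat n).2.1 _ _ (ih n)
  | S2L c s ih => exact fun n => (compat n).2.2.1 _ _ _ _ (ih n) (lrel_refl s n)
  | S2R t c ih => exact fun n => (compat n).2.2.1 _ _ _ _ (lrel_refl t n) (ih n)
  | appL c s ih => exact fun n => (compat n).2.2.2.1 _ _ _ _ (ih n) (lrel_refl s n)
  | appR t c ih => exact fun n => (compat n).2.2.2.1 _ _ _ _ (lrel_refl t n) (ih n)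

end XCL


open XCL in
/-- The step-indexed logical relation for xCL is sound for the contextual preorder. -/
theorem logRel_sound : ∀ p q : Tm, LRel p q → CtxLe p q := by
  intro p q h C hc
  exact lrel_adequate (lrel_plug C h) hc
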